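/- arXiv:0706.1405 — 4 statements merged into one kernel-verified Lean document; each statement's English description precedes it below -/
import Mathlib

section
/- The absolute order on a finite Coxeter group W is graded with rank function ℓ_T: if u ⪯ v then every maximal chain from u to v in the interval [u,v] has length ℓ_T(v) − ℓ_T(u). -/
variable {B W : Type*} [Group W] {M : CoxeterMatrix B}

/-- The reflection length `ℓ_T w`: the minimal number of reflections of the
Coxeter system whose product is `w`. -/
noncomputable def absLen (cs : CoxeterSystem M W) (w : W) : ℕ :=
  sInf {k | ∃ l : List W, l.length = k ∧ (∀ t ∈ l, cs.IsReflection t) ∧ l.prod = w}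

/-- The absolute order: `u ⪯ v` iff `ℓ_T u + ℓ_T (u⁻¹ v) = ℓ_T v`. -/
def absLe (cs : CoxeterSystem M W) (u v : W) : Prop :=
  absLen cs u + absLen cs (u⁻¹ * v) = absLen cs v

/-- `a` is covered by `b` within the interval `[u, v]` of the absolute order. -/
def absCovByIn (cs : CoxeterSystem M W) (u v a b : W) : Prop :=
  absLe cs a b ∧ a ≠ b ∧
    ∀ w : W, absLe cs u w → absLe cs w v → absLe cs a w → absLe cs w b →
      w = a ∨ w = b

namespace AbsAux

lemma absLen_le (cs : CoxeterSystem M W) {w : W} {l : List W}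
    (hl : ∀ t ∈ l, cs.IsReflection t) (hp : l.prod = w) :
    absLen cs w ≤ l.length :=
  Nat.sInf_le ⟨l, rfl, hl, hp⟩

lemma absSet_nonempty (cs : CoxeterSystem M W) (w : W) :
    {k | ∃ l : List W, l.length = k ∧ (∀ t ∈ l, cs.IsReflection t) ∧ l.prod = w}.Nonempty := by
  obtain ⟨ω, rfl⟩ := cs.wordProd_surjective w
  refine ⟨(ω.map cs.simple).length, ω.map cs.simple, rfl, ?_, rfl⟩
  intro t ht
  simp only [List.mem_map] at ht
  obtain ⟨i, _, rfl⟩ := ht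
  exact cs.isReflection_simple i

lemma absLen_spec (cs : CoxeterSystem M W) (w : W) :
    ∃ l : List W, l.length = absLen cs w ∧ (∀ t ∈ l, cs.IsReflection t) ∧ l.prod = w :=
  Nat.sInf_mem (absSet_nonempty cs w)

lemma eq_one_of_absLen_eq_zero (cs : CoxeterSystem M W) {w : W}
    (h : absLen cs w = 0) : w = 1 := by
  obtain ⟨l, hlen, _, hprod⟩ := absLen_spec cs w
  rw [h, List.length_eq_zero_iff] at hlen
  subst hlen; simpa using hprod.symm

lemma absLen_mul_le (cs : CoxeterSystem M W) (x y : W) :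
    absLen cs (x * y) ≤ absLen cs x + absLen cs y := by
  obtain ⟨l1, h1, hr1, hp1⟩ := absLen_spec cs x
  obtain ⟨l2, h2, hr2, hp2⟩ := absLen_spec cs y
  have := absLen_le cs (l := l1 ++ l2) (w := x * y)
    (by intro t ht; rcases List.mem_append.mp ht with h | h
        exacts [hr1 t h, hr2 t h])
    (by rw [List.prod_append, hp1, hp2])
  simpa [h1, h2] using this

lemma lengthParity_reflection (cs : CoxeterSystem M W) {t : W}
    (ht : cs.IsReflection t) :
    cs.lengthParity t = Multiplicative.ofAdd (1 : ZMod 2) := by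
  obtain ⟨w, i, rfl⟩ := ht
  rw [map_mul, map_mul, map_inv, cs.lengthParity_simple, mul_comm, ← mul_assoc]
  simp

lemma parity_prod (cs : CoxeterSystem M W) (l : List W)
    (hl : ∀ t ∈ l, cs.IsReflection t) :
    cs.lengthParity l.prod = Multiplicative.ofAdd ((l.length : ZMod 2)) := by
  induction l with
  | nil => simp
  | cons t rest ih =>
    rw [List.prod_cons, map_mul, lengthParity_reflection cs (hl t (by simp)),
      ih (fun x hx => hl x (List.mem_cons_of_mem _ hx)), List.length_cons, ← ofAdd_add]
    congr 1
    push_cast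
    ring

lemma parity_eq (cs : CoxeterSystem M W) (w : W) :
    cs.lengthParity w = Multiplicative.ofAdd ((absLen cs w : ZMod 2)) := by
  obtain ⟨l, hlen, hr, hp⟩ := absLen_spec cs w
  subst hp
  rw [parity_prod cs l hr, hlen]

lemma absLen_parity_ne (cs : CoxeterSystem M W) {t : W} (ht : cs.IsReflection t)
    (w : W) : absLen cs (w * t) ≠ absLen cs w := by
  intro h
  have := parity_eq cs (w * t)
  rw [map_mul, parity_eq cs w, lengthParity_reflection cs ht, ← ofAdd_add, h] at this
  have h2 : ((absLen cs w : ZMod 2)) + 1 = (absLen cs w : ZMod 2) :=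
    Multiplicative.ofAdd.injective this
  simp [add_eq_left] at h2

lemma absLen_reflection (cs : CoxeterSystem M W) {t : W} (ht : cs.IsReflection t) :
    absLen cs t = 1 := by
  have h1 : absLen cs t ≤ 1 := by
    simpa using absLen_le cs (l := [t]) (by simpa using ht) (by simp)
  have habs1 : absLen cs (1 : W) = 0 :=
    Nat.le_zero.mp (by simpa using absLen_le cs (l := []) (w := (1:W)) (by simp) (by simp))
  have h0 : absLen cs t ≠ 0 := by
    intro h
    apply absLen_parity_ne cs ht 1
    rw [one_mul, h, habs1]
  omega

lemma refl_step (cs : CoxeterSystem M W) {t : W} (ht : cs.IsReflection t) (w : W) :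
    absLen cs (w * t) = absLen cs w + 1 ∨ absLen cs w = absLen cs (w * t) + 1 := by
  have h1 : absLen cs (w * t) ≤ absLen cs w + 1 := by
    have := absLen_mul_le cs w t
    rw [absLen_reflection cs ht] at this
    exact this
  have h2 : absLen cs w ≤ absLen cs (w * t) + 1 := by
    have := absLen_mul_le cs (w * t) t
    rw [absLen_reflection cs ht, mul_assoc, ht.mul_self, mul_one] at this
    exact this
  have h3 := absLen_parity_ne cs ht w
  omega

lemma absLe_trans (cs : CoxeterSystem M W) {x y z : W}
    (h1 : absLe cs x y) (h2 : absLe cs y z) : absLe cs x z := by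
  unfold absLe at *
  have ha : absLen cs (x⁻¹ * z) ≤ absLen cs (x⁻¹ * y) + absLen cs (y⁻¹ * z) := by
    have := absLen_mul_le cs (x⁻¹ * y) (y⁻¹ * z)
    rwa [show (x⁻¹ * y) * (y⁻¹ * z) = x⁻¹ * z by group] at this
  have hb : absLen cs z ≤ absLen cs x + absLen cs (x⁻¹ * z) := by
    have := absLen_mul_le cs x (x⁻¹ * z)
    rwa [show x * (x⁻¹ * z) = z by group] at this
  omega

lemma cover_step (cs : CoxeterSystem M W) {u v a b : W}
    (hua : absLe cs u a) (hbv : absLe cs b v)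
    (hc : absCovByIn cs u v a b) : absLen cs b = absLen cs a + 1 := by
  obtain ⟨hab, hne, hmax⟩ := hc
  have hab' : absLen cs a + absLen cs (a⁻¹ * b) = absLen cs b := hab
  set k := absLen cs (a⁻¹ * b) with hk
  have hk1 : 1 ≤ k := by
    rcases Nat.eq_zero_or_pos k with h0 | h
    · have h1 : absLen cs (a⁻¹ * b) = 0 := by rw [← hk]; exact h0
      exact absurd (inv_mul_eq_one.mp (eq_one_of_absLen_eq_zero cs h1)) hne
    · exact h
  obtain ⟨l, hlen, hrefl, hprod⟩ := absLen_spec cs (a⁻¹ * b)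
  rw [← hk] at hlen
  rcases l with _ | ⟨t, rest⟩
  · simp at hlen; omega
  have ht : cs.IsReflection t := hrefl t (by simp)
  have hlenr : rest.length + 1 = k := by simpa using hlen
  have hprod' : t * rest.prod = a⁻¹ * b := by simpa using hprod
  have hrestle : absLen cs rest.prod ≤ rest.length :=
    absLen_le cs (fun x hx => hrefl x (List.mem_cons_of_mem _ hx)) rfl
  have hbw : (a * t) * rest.prod = b := by
    rw [mul_assoc, hprod', ← mul_assoc, mul_inv_cancel, one_mul]
  have hb_le : absLen cs b ≤ absLen cs (a * t) + absLen cs rest.prod := by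
    have := absLen_mul_le cs (a * t) rest.prod
    rwa [hbw] at this
  have hwlen : absLen cs (a * t) = absLen cs a + 1 := by
    rcases refl_step cs ht a with h | h
    · exact h
    · omega
  have hk2 : k = 1 := by
    by_contra hk2
    have hrest_len : absLen cs rest.prod = rest.length := by omega
    have hlaw : absLe cs a (a * t) := by
      unfold absLe
      rw [show a⁻¹ * (a * t) = t by group, absLen_reflection cs ht, hwlen]
    have hlwb : absLe cs (a * t) b := by
      unfold absLe
      rw [show (a * t)⁻¹ * b = rest.prod by rw [← hbw]; group]
      omega
    rcases hmax (a * t) (absLe_trans cs hua hlaw) (absLe_trans cs hlwb hbv)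
        hlaw hlwb with h | h
    · rw [h] at hwlen; omega
    · rw [h] at hwlen; omega
  omega

lemma chain_aux (cs : CoxeterSystem M W) (u v : W) :
    ∀ (l : List W) (a : W), List.Chain (absCovByIn cs u v) a l →
      (∀ x ∈ a :: l, absLe cs u x ∧ absLe cs x v) →
      absLen cs ((a :: l).getLast (by simp)) = absLen cs a + l.length := by
  intro l
  induction l with
  | nil => intro a _ _; simp
  | cons b rest ih =>
    intro a hchain hmem
    obtain ⟨hab, hchain'⟩ := List.isChain_cons_cons.mp hchain
    have hua : absLe cs u a := (hmem a (by simp)).1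
    have hbv : absLe cs b v := (hmem b (by simp)).2
    have hstep := cover_step cs hua hbv hab
    have hih := ih b hchain' (fun x hx => hmem x (List.mem_cons_of_mem a hx))
    rw [show (a :: b :: rest).getLast (by simp) = (b :: rest).getLast (by simp) from
      List.getLast_cons _]
    rw [hih, hstep, List.length_cons]
    omega

end AbsAux

/-- The absolute order on a finite Coxeter group is graded with rank function
`ℓ_T`: if `u ⪯ v`, then every maximal chain of the interval `[u, v]` (i.e.
every chain from `u` to `v` whose consecutive members are covers in the
interval) has length `ℓ_T v - ℓ_T u`. -/
theorem absolute_order_graded [Finite W] (cs : CoxeterSystem M W) (u v : W)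
    (huv : absLe cs u v) (l : List W)
    (hhead : l.head? = some u) (hlast : l.getLast? = some v)
    (hmem : ∀ x ∈ l, absLe cs u x ∧ absLe cs x v)
    (hchain : l.Chain' (absCovByIn cs u v)) :
    l.length = absLen cs v - absLen cs u + 1 := by
  rcases l with _ | ⟨a, rest⟩
  · simp at hhead
  have ha : a = u := by simpa using hhead
  subst ha
  have hv : (a :: rest).getLast (by simp) = v := by
    have := List.getLast?_eq_getLast (l := a :: rest) (by simp)
    rw [this] at hlast
    exact Option.some_injective _ hlast
  have hchain2 : List.Chain (absCovByIn cs a v) a rest := hchain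
  have := AbsAux.chain_aux cs a v rest a hchain2 hmem
  rw [hv] at this
  have hle : absLen cs a ≤ absLen cs v := by
    have := huv; unfold absLe at this; omega
  simp only [List.length_cons]
  omega
end

section
/- If Δ is a constructible simplicial complex, then the link of every face of Δ is constructible. -/
open scoped BigOperators

/-- A (finite, abstract) simplicial complex on vertex set `V`:
a collection of finite subsets of `V` closed under taking subsets. -/
structure SC (V : Type*) where
  faces : Set (Finset V)
  down : ∀ ⦃s t : Finset V⦄, s ∈ faces → t ⊆ s → t ∈ faces

namespace SC

variable {V : Type*}

/-- The union of two simplicial complexes. -/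
def union (Δ₁ Δ₂ : SC V) : SC V :=
  ⟨Δ₁.faces ∪ Δ₂.faces, by
    rintro s t (h | h) hts
    · exact Or.inl (Δ₁.down h hts)
    · exact Or.inr (Δ₂.down h hts)⟩

/-- The intersection of two simplicial complexes. -/
def inter (Δ₁ Δ₂ : SC V) : SC V :=
  ⟨Δ₁.faces ∩ Δ₂.faces, fun _ _ h hts => ⟨Δ₁.down h.1 hts, Δ₂.down h.2 hts⟩⟩

/-- The simplex on a finite vertex set `s`: all subsets of `s`. -/
def simplex (s : Finset V) : SC V :=
  ⟨{t | t ⊆ s}, fun _ _ h h' => h'.trans h⟩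

/-- The link of a face `F`: `{G \ F : G ∈ Δ, F ⊆ G}`. -/
def link [DecidableEq V] (Δ : SC V) (F : Finset V) : SC V :=
  ⟨{G | Disjoint G F ∧ G ∪ F ∈ Δ.faces}, by
    rintro s t ⟨hd, hm⟩ hts
    exact ⟨hd.mono_left hts, Δ.down hm (Finset.union_subset_union hts le_rfl)⟩⟩

/-- The dimension of a simplicial complex, as an integer
(the complex `{∅}` has dimension `-1`). -/
noncomputable def dim (Δ : SC V) : ℤ :=
  sSup ((fun s : Finset V => (s.card : ℤ) - 1) '' Δ.faces)

/-- The geometric realization of a simplicial complex on a finite vertex set,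
as a subspace of `V → ℝ`. -/
def realization [Fintype V] (Δ : SC V) : Set (V → ℝ) :=
  {f | (∀ v, 0 ≤ f v) ∧ (∑ v, f v) = 1 ∧ ∃ s ∈ Δ.faces, ∀ v, f v ≠ 0 → v ∈ s}

end SC

/-- Constructibility (generalized): a `d`-dimensional complex is constructible
if it is a simplex, or the union of two `d`-dimensional constructible complexes
whose intersection is constructible of dimension at least `d - 1`. -/
inductive Constructible {V : Type*} : SC V → ℤ → Prop
  | simplex (s : Finset V) : Constructible (SC.simplex s) ((s.card : ℤ) - 1)
  | union {Δ₁ Δ₂ : SC V} {d e : ℤ} : Constructible Δ₁ d → Constructible Δ₂ d →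
      d - 1 ≤ e → Constructible (SC.inter Δ₁ Δ₂) e →
      Constructible (SC.union Δ₁ Δ₂) d

/-- A topological space is `k`-connected if it is nonempty (for `k ≥ -1`) and
all its homotopy groups `π_i` vanish for `0 ≤ i ≤ k`, at every basepoint. -/
def KConnected (k : ℤ) (X : Type*) [TopologicalSpace X] : Prop :=
  (-1 ≤ k → Nonempty X) ∧
    ∀ (x : X) (i : ℕ), (i : ℤ) ≤ k → Subsingleton (HomotopyGroup (Fin i) X x)

theorem SC.ext' {V : Type*} {Δ₁ Δ₂ : SC V} (h : Δ₁.faces = Δ₂.faces) : Δ₁ = Δ₂ := by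
  cases Δ₁; cases Δ₂; simp_all

theorem link_union_eq {V : Type*} [DecidableEq V] (A B : SC V) (F : Finset V) :
    SC.link (SC.union A B) F = SC.union (SC.link A F) (SC.link B F) := by
  apply SC.ext'; ext G
  simp only [SC.link, SC.union, Set.mem_setOf_eq, Set.mem_union]
  tauto

theorem link_inter_eq {V : Type*} [DecidableEq V] (A B : SC V) (F : Finset V) :
    SC.link (SC.inter A B) F = SC.inter (SC.link A F) (SC.link B F) := by
  apply SC.ext'; ext G
  simp only [SC.link, SC.inter, Set.mem_setOf_eq, Set.mem_inter_iff]
  tauto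

theorem link_union_left {V : Type*} [DecidableEq V] (A B : SC V) (F : Finset V)
    (hFB : F ∉ B.faces) : SC.link (SC.union A B) F = SC.link A F := by
  apply SC.ext'; ext G
  simp only [SC.link, SC.union, Set.mem_setOf_eq, Set.mem_union]
  constructor
  · rintro ⟨hd, (h | h)⟩
    · exact ⟨hd, h⟩
    · exact absurd (B.down h Finset.subset_union_right) hFB
  · rintro ⟨hd, h⟩; exact ⟨hd, Or.inl h⟩

theorem link_union_right {V : Type*} [DecidableEq V] (A B : SC V) (F : Finset V)
    (hFA : F ∉ A.faces) : SC.link (SC.union A B) F = SC.link B F := by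
  apply SC.ext'; ext G
  simp only [SC.link, SC.union, Set.mem_setOf_eq, Set.mem_union]
  constructor
  · rintro ⟨hd, (h | h)⟩
    · exact absurd (A.down h Finset.subset_union_right) hFA
    · exact ⟨hd, h⟩
  · rintro ⟨hd, h⟩; exact ⟨hd, Or.inr h⟩

theorem constructible_link_aux {V : Type*} [DecidableEq V] {Δ : SC V} {d : ℤ}
    (h : Constructible Δ d) :
    ∀ F ∈ Δ.faces, Constructible (SC.link Δ F) (d - F.card) := by
  induction h with
  | simplex s =>
    intro F hF
    have hFs : F ⊆ s := hF
    have heq : SC.link (SC.simplex s) F = SC.simplex (s \ F) := by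
      apply SC.ext'; ext G
      simp only [SC.link, SC.simplex, Set.mem_setOf_eq]
      constructor
      · rintro ⟨hd, hsub⟩
        exact Finset.subset_sdiff.mpr ⟨(Finset.union_subset_iff.mp hsub).1, hd⟩
      · intro hsub
        rw [Finset.subset_sdiff] at hsub
        exact ⟨hsub.2, Finset.union_subset hsub.1 hFs⟩
    rw [heq]
    have h1 : F.card ≤ s.card := Finset.card_le_card hFs
    have hc : ((s \ F).card : ℤ) - 1 = (s.card : ℤ) - 1 - F.card := by
      rw [Finset.card_sdiff_of_subset hFs]; omega
    rw [← hc]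
    exact Constructible.simplex _
  | @union Δ₁ Δ₂ d e h1 h2 hde hI ih1 ih2 ihI =>
    intro F hF
    by_cases hF1 : F ∈ Δ₁.faces <;> by_cases hF2 : F ∈ Δ₂.faces
    · rw [link_union_eq]
      refine Constructible.union (ih1 F hF1) (ih2 F hF2) (e := e - F.card) (by omega) ?_
      rw [← link_inter_eq]
      exact ihI F ⟨hF1, hF2⟩
    · rw [link_union_left _ _ _ hF2]; exact ih1 F hF1
    · rw [link_union_right _ _ _ hF1]; exact ih2 F hF2
    · rcases hF with h | h
      · exact absurd h hF1
      · exact absurd h hF2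

/-- The link of any face of a constructible simplicial complex is
constructible. -/
theorem constructible_link {V : Type*} [DecidableEq V] (Δ : SC V) (d : ℤ)
    (h : Constructible Δ d) (F : Finset V) (hF : F ∈ Δ.faces) :
    ∃ e : ℤ, Constructible (SC.link Δ F) e :=
  ⟨d - F.card, constructible_link_aux h F hF⟩
end

section
/- Let Δ₁, ..., Δ_k be d-dimensional constructible simplicial complexes such that the intersection of any two or more of them is constructible of dimension d−1. Then Δ₁ ∪ ⋯ ∪ Δ_k is constructible. -/
open scoped BigOperators

namespace SC

/-- The union of a finite family of simplicial complexes. -/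
def unionFam {V ι : Type*} (S : Finset ι) (Δ : ι → SC V) : SC V :=
  ⟨{s | ∃ i ∈ S, s ∈ (Δ i).faces}, by
    rintro s t ⟨i, hi, hs⟩ hts
    exact ⟨i, hi, (Δ i).down hs hts⟩⟩

/-- The intersection of a finite family of simplicial complexes. -/
def interFam {V ι : Type*} (S : Finset ι) (Δ : ι → SC V) : SC V :=
  ⟨{s | ∀ i ∈ S, s ∈ (Δ i).faces}, fun s t hs hts i hi => (Δ i).down (hs i hi) hts⟩

end SC

theorem SC.ext'_s11 {V : Type*} {A B : SC V} (h : A.faces = B.faces) : A = B := by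
  cases A; cases B; simpa using h

theorem unionFam_singleton {V ι : Type*} (i : ι) (Δ : ι → SC V) :
    SC.unionFam {i} Δ = Δ i := by
  apply SC.ext'_s11
  ext s
  simp [SC.unionFam]

theorem unionFam_insert {V ι : Type*} [DecidableEq ι] (j : ι) (S : Finset ι) (Δ : ι → SC V) :
    SC.unionFam (insert j S) Δ = SC.union (Δ j) (SC.unionFam S Δ) := by
  apply SC.ext'_s11
  ext s
  simp [SC.unionFam, SC.union, or_and_right, exists_or]

theorem inter_unionFam {V ι : Type*} (j : ι) (S : Finset ι) (Δ : ι → SC V) :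
    SC.inter (Δ j) (SC.unionFam S Δ) =
      SC.unionFam S (fun i => SC.inter (Δ j) (Δ i)) := by
  apply SC.ext'_s11
  ext s
  simp only [SC.inter, SC.unionFam, Set.mem_inter_iff, Set.mem_setOf_eq]
  constructor
  · rintro ⟨hj, i, hi, hs⟩; exact ⟨i, hi, hj, hs⟩
  · rintro ⟨i, hi, hj, hs⟩; exact ⟨hj, i, hi, hs⟩

theorem interFam_pair {V ι : Type*} [DecidableEq ι] (i j : ι) (Δ : ι → SC V) :
    SC.interFam {i, j} Δ = SC.inter (Δ i) (Δ j) := by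
  apply SC.ext'_s11
  ext s
  simp only [SC.interFam, SC.inter, Set.mem_setOf_eq, Set.mem_inter_iff, Finset.mem_insert,
    Finset.mem_singleton]
  constructor
  · intro h; exact ⟨h i (Or.inl rfl), h j (Or.inr rfl)⟩
  · rintro ⟨h1, h2⟩ x hx; rcases hx with rfl | rfl <;> assumption

theorem interFam_insert_of_nonempty {V ι : Type*} [DecidableEq ι] (j : ι) (T : Finset ι)
    (hT : T.Nonempty) (Δ : ι → SC V) :
    SC.interFam T (fun i => SC.inter (Δ j) (Δ i)) = SC.interFam (insert j T) Δ := by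
  apply SC.ext'_s11
  ext s
  simp only [SC.interFam, SC.inter, Set.mem_setOf_eq, Set.mem_inter_iff, Finset.mem_insert]
  constructor
  · intro h
    obtain ⟨i0, hi0⟩ := hT
    rintro x (rfl | hx)
    · exact (h i0 hi0).1
    · exact (h x hx).2
  · intro h i hi
    exact ⟨h j (Or.inl rfl), h i (Or.inr hi)⟩

theorem constructible_unionFam_aux {V ι : Type*} [DecidableEq ι] :
    ∀ (n : ℕ) (S : Finset ι), S.card = n → ∀ (Δ : ι → SC V) (d e : ℤ), d - 1 ≤ e →
      S.Nonempty → (∀ i ∈ S, Constructible (Δ i) d) →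
      (∀ T ⊆ S, 2 ≤ T.card → Constructible (SC.interFam T Δ) e) →
      Constructible (SC.unionFam S Δ) d := by
  intro n
  induction n with
  | zero =>
    intro S hcard Δ d e _ hS _ _
    exact absurd (Finset.card_eq_zero.mp hcard ▸ hS) (by simp)
  | succ n ih =>
    intro S hcard Δ d e hde hS h1 h2
    obtain ⟨j, hj⟩ := hS
    rcases Nat.eq_zero_or_pos n with rfl | hn
    · -- S is a singleton
      obtain ⟨a, ha⟩ := Finset.card_eq_one.mp hcard
      subst ha
      rw [unionFam_singleton]
      exact h1 a (Finset.mem_singleton_self a)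
    · -- S = insert j S', S' nonempty
      set S' := S.erase j with hS'
      have hins : insert j S' = S := Finset.insert_erase hj
      have hcard' : S'.card = n := by
        rw [hS', Finset.card_erase_of_mem hj, hcard]
        omega
      have hS'ne : S'.Nonempty := Finset.card_pos.mp (hcard' ▸ hn)
      have hjS' : j ∉ S' := Finset.notMem_erase j S
      rw [← hins, unionFam_insert]
      refine Constructible.union (h1 j hj)
        (ih S' hcard' Δ d e hde hS'ne (fun i hi => h1 i (Finset.mem_of_mem_erase hi))
          (fun T hT hTc => h2 T (hT.trans (Finset.erase_subset j S)) hTc))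
        hde ?_
      rw [inter_unionFam]
      refine ih S' hcard' (fun i => SC.inter (Δ j) (Δ i)) e e (by linarith) hS'ne ?_ ?_
      · intro i hi
        have hij : j ≠ i := fun hh => hjS' (hh ▸ hi)
        show Constructible ((Δ j).inter (Δ i)) e
        rw [← interFam_pair]
        refine h2 {j, i} ?_ ?_
        · intro x hx
          rcases Finset.mem_insert.mp hx with rfl | hx
          · exact hj
          · exact Finset.mem_of_mem_erase (Finset.mem_singleton.mp hx ▸ hi)
        · rw [Finset.card_insert_of_notMem (by simpa using hij), Finset.card_singleton]
      · intro T hT hTc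
        have hTne : T.Nonempty := Finset.card_pos.mp (by omega)
        rw [interFam_insert_of_nonempty j T hTne]
        refine h2 (insert j T) ?_ ?_
        · intro x hx
          rcases Finset.mem_insert.mp hx with rfl | hx
          · exact hj
          · exact Finset.mem_of_mem_erase (hT hx)
        · exact le_trans hTc (Finset.card_le_card (Finset.subset_insert j T))

/-- If Δ₁, …, Δ_k are d-dimensional constructible simplicial complexes such
that the intersection of any two or more of them is constructible of
dimension d - 1, then their union is constructible. -/
theorem constructible_unionFam_dim_d_sub_one {V : Type*} (k : ℕ) (hk : 0 < k)
    (Δ : Fin k → SC V) (d : ℤ)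
    (h : ∀ i, Constructible (Δ i) d)
    (hint : ∀ S : Finset (Fin k), 2 ≤ S.card →
      Constructible (SC.interFam S Δ) (d - 1)) :
    Constructible (SC.unionFam Finset.univ Δ) d := by
  have hne : (Finset.univ : Finset (Fin k)).Nonempty := by
    have : Nonempty (Fin k) := ⟨⟨0, hk⟩⟩
    exact Finset.univ_nonempty
  exact constructible_unionFam_aux (Finset.univ : Finset (Fin k)).card Finset.univ rfl Δ d (d - 1)
    le_rfl hne (fun i _ => h i) (fun T _ hTc => hint T hTc)
end

section
/- Let P be a finite poset of rank d with a minimum element. If P is the union of strongly constructible order ideals I₁, ..., I_k of rank d such that the intersection of any two or more of these ideals is strongly constructible of rank d−1, then P is strongly constructible. -/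
open scoped BigOperators

namespace SC

/-- The order complex of a poset `P`: the simplicial complex whose faces are
the finite chains of `P`. -/
def orderComplex (P : Type*) [PartialOrder P] : SC P :=
  ⟨{s | ∀ a ∈ s, ∀ b ∈ s, a ≤ b ∨ b ≤ a},
    fun s t hs hts a ha b hb => hs a (hts ha) b (hts hb)⟩

end SC

/-- A simplicial complex is pure shellable of dimension `d` if its facets all
have dimension `d` and can be listed as `G₁, …, G_m` so that for `i > 1` the
intersection of `G₁ ∪ ⋯ ∪ G_{i-1}` with `G_i` is pure of dimension `d - 1`. -/
def PureShellable {V : Type*} (Δ : SC V) (d : ℕ) : Prop :=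
  ∃ (m : ℕ) (G : Fin m → Finset V), 0 < m ∧
    (∀ i, G i ∈ Δ.faces ∧ (G i).card = d + 1) ∧
    (∀ s ∈ Δ.faces, ∃ i, s ⊆ G i) ∧
    ∀ i : Fin m, 0 < (i : ℕ) →
      ∀ s ⊆ G i, (∃ j, j < i ∧ s ⊆ G j) →
        ∃ t, t ⊆ G i ∧ (∃ j, j < i ∧ t ⊆ G j) ∧ t.card = d ∧ s ⊆ t

/-- A poset has rank `d` if its longest chains have `d + 1` elements. -/
def HasRank (P : Type*) [Preorder P] (d : ℕ) : Prop :=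
  (∃ l : List P, l.Chain' (· < ·) ∧ l.length = d + 1) ∧
    ∀ l : List P, l.Chain' (· < ·) → l.length ≤ d + 1

/-- Strong constructibility: a finite poset `P` of rank `d` with a minimum
element is strongly constructible if it is bounded and pure shellable, or it is
the union of two strongly constructible proper order ideals of rank `d` whose
intersection is strongly constructible of rank at least `d - 1`. -/
inductive SConstr : ∀ (P : Type) [PartialOrder P], ℕ → Prop
  | base (P : Type) [PartialOrder P] [Finite P] (d : ℕ)
      (hbot : ∃ m : P, ∀ x, m ≤ x) (htop : ∃ M : P, ∀ x, x ≤ M)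
      (hshell : PureShellable (SC.orderComplex P) d) : SConstr P d
  | union (P : Type) [PartialOrder P] [Finite P] (d e : ℕ) (I₁ I₂ : Set P)
      (hmin : ∃ m : P, ∀ x, m ≤ x) (hrank : HasRank P d)
      (hl1 : IsLowerSet I₁) (hl2 : IsLowerSet I₂)
      (hp1 : I₁ ≠ Set.univ) (hp2 : I₂ ≠ Set.univ)
      (hcover : I₁ ∪ I₂ = Set.univ)
      (hr1 : HasRank I₁ d) (hr2 : HasRank I₂ d)
      (hc1 : SConstr I₁ d) (hc2 : SConstr I₂ d)
      (he : d - 1 ≤ e)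
      (hre : HasRank ↥(I₁ ∩ I₂) e) (hce : SConstr ↥(I₁ ∩ I₂) e) :
      SConstr P d

set_option linter.unusedSectionVars false

section helpers
variable {P Q : Type*} [PartialOrder P] [PartialOrder Q]

/-- lift a list in P with all members in S to a list in the subtype -/
lemma lift_list {S : Set P} : ∀ l : List P, (∀ x ∈ l, x ∈ S) →
    ∃ l' : List ↥S, l'.map Subtype.val = l := by
  intro l
  induction l with
  | nil => exact fun _ => ⟨[], rfl⟩
  | cons a t ih =>
    intro h
    obtain ⟨t', ht⟩ := ih (fun x hx => h x (List.mem_cons_of_mem _ hx))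
    exact ⟨⟨a, h a List.mem_cons_self⟩ :: t', by simp [ht]⟩

lemma chain_le_of_hasRank {S : Set P} {r : ℕ} (h : HasRank ↥S r)
    (l : List P) (hc : l.Chain' (· < ·)) (hm : ∀ x ∈ l, x ∈ S) :
    l.length ≤ r + 1 := by
  obtain ⟨l', hl'⟩ := lift_list l hm
  have hc' : l'.Chain' (· < ·) := by
    rw [← hl'] at hc
    rw [List.Chain', List.isChain_map] at hc
    exact hc.imp (fun a b hab => Subtype.coe_lt_coe.mp hab)
  have := h.2 l' hc'
  rw [← hl', List.length_map]
  exact this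

lemma chain_subtype_val {S : Set P} (l : List ↥S) (hc : l.Chain' (· < ·)) :
    (l.map Subtype.val).Chain' (· < ·) := by
  rw [List.Chain', List.isChain_map]
  exact hc.imp (fun a b hab => Subtype.coe_lt_coe.mpr hab)

lemma le_getLast : ∀ (l : List P) (h : l ≠ []), l.Pairwise (· < ·) →
    ∀ x ∈ l, x ≤ l.getLast h := by
  intro l
  induction l with
  | nil => simp
  | cons a t ih =>
    intro _ hp x hx
    rcases eq_or_ne t ([] : List _) with ht | ht
    · subst ht
      simp at hx
      simp [hx]
    · rw [List.getLast_cons ht]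
      rcases List.mem_cons.mp hx with rfl | hx
      · exact le_of_lt ((List.pairwise_cons.mp hp).1 _ (List.getLast_mem ht))
      · exact ih ht (List.pairwise_cons.mp hp).2 x hx

lemma HasRank.congr {r : ℕ} (f : P ≃o Q) (h : HasRank P r) : HasRank Q r := by
  obtain ⟨⟨l, hl, hlen⟩, hub⟩ := h
  constructor
  · refine ⟨l.map f, ?_, by simp [hlen]⟩
    rw [List.Chain', List.isChain_map]
    exact hl.imp (fun a b hab => f.strictMono hab)
  · intro l' hl'
    have hmap : (l'.map f.symm).Chain' (· < ·) := by
      rw [List.Chain', List.isChain_map]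
      exact hl'.imp (fun a b hab => f.symm.strictMono hab)
    have := hub _ hmap
    simpa using this

lemma HasRank.nonempty' {X : Type*} [Preorder X] {r : ℕ} (h : HasRank X r) : Nonempty X := by
  obtain ⟨⟨l, _, hlen⟩, _⟩ := h
  cases l with
  | nil => simp at hlen
  | cons a _ => exact ⟨a⟩

def univIso : (Set.univ : Set P) ≃o P where
  toFun := Subtype.val
  invFun x := ⟨x, trivial⟩
  left_inv _ := rfl
  right_inv _ := rfl
  map_rel_iff' := Iff.rfl

def imgIso (f : P ≃o Q) (s : Set P) : s ≃o (f '' s : Set Q) where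
  toFun x := ⟨f x, ⟨x.1, x.2, rfl⟩⟩
  invFun y := ⟨f.symm y, by
    obtain ⟨x, hx, hxe⟩ := y.2
    rw [← hxe]; simpa using hx⟩
  left_inv x := by simp
  right_inv y := by ext; simp
  map_rel_iff' := f.le_iff_le

def restrIso (S A : Set P) (h : A ⊆ S) :
    ↥(Subtype.val ⁻¹' A : Set ↥S) ≃o ↥A where
  toFun x := ⟨x.1.1, x.2⟩
  invFun y := ⟨⟨y.1, h y.2⟩, y.2⟩
  left_inv _ := rfl
  right_inv _ := rfl
  map_rel_iff' := Iff.rfl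

lemma hasRank_iUnion {n : ℕ} (hn : 0 < n) (A : Fin n → Set P)
    (hlow : ∀ i, IsLowerSet (A i)) {r : ℕ} (hr : ∀ i, HasRank ↥(A i) r) :
    HasRank ↥(⋃ i, A i) r := by
  constructor
  · obtain ⟨l, hl, hlen⟩ := (hr ⟨0, hn⟩).1
    refine ⟨l.map (fun x => ⟨x.1, Set.mem_iUnion.mpr ⟨⟨0, hn⟩, x.2⟩⟩), ?_, by simp [hlen]⟩
    rw [List.Chain', List.isChain_map]
    exact hl.imp (fun a b hab => by exact Subtype.mk_lt_mk.mpr (Subtype.coe_lt_coe.mpr hab))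
  · intro l hl
    rcases eq_or_ne l ([] : List _) with hne | hne
    · simp [hne]
    · have hy := List.getLast_mem hne
      obtain ⟨i, hi⟩ := Set.mem_iUnion.mp (l.getLast hne).2
      have hall : ∀ x ∈ l.map Subtype.val, x ∈ A i := by
        intro x hx
        obtain ⟨x', hx', rfl⟩ := List.mem_map.mp hx
        have hxle : x' ≤ l.getLast hne :=
          le_getLast l hne (List.isChain_iff_pairwise.mp hl) x' hx'
        exact hlow i hxle hi
      have := chain_le_of_hasRank (hr i) _ (chain_subtype_val l hl) hall
      simpa using this

end helpers

section congrs
variable {P Q : Type*} [PartialOrder P] [PartialOrder Q]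

lemma pureShellable_congr (f : P ≃o Q) {d : ℕ}
    (h : PureShellable (SC.orderComplex P) d) : PureShellable (SC.orderComplex Q) d := by
  classical
  obtain ⟨m, G, hm, hG, hcov, hsh⟩ := h
  have hface : ∀ s : Finset P, s ∈ (SC.orderComplex P).faces →
      s.image f ∈ (SC.orderComplex Q).faces := by
    intro s hs a ha b hb
    obtain ⟨a', ha', rfl⟩ := Finset.mem_image.mp ha
    obtain ⟨b', hb', rfl⟩ := Finset.mem_image.mp hb
    rcases hs a' ha' b' hb' with h' | h'
    · exact Or.inl (f.monotone h')
    · exact Or.inr (f.monotone h')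
  have hfaceQ : ∀ s : Finset Q, s ∈ (SC.orderComplex Q).faces →
      s.image f.symm ∈ (SC.orderComplex P).faces := by
    intro s hs a ha b hb
    obtain ⟨a', ha', rfl⟩ := Finset.mem_image.mp ha
    obtain ⟨b', hb', rfl⟩ := Finset.mem_image.mp hb
    rcases hs a' ha' b' hb' with h' | h'
    · exact Or.inl (f.symm.monotone h')
    · exact Or.inr (f.symm.monotone h')
  have hsub : ∀ (s : Finset Q) (t : Finset P), s.image f.symm ⊆ t ↔ s ⊆ t.image f := by
    intro s t
    constructor
    · intro h x hx
      have : f.symm x ∈ t := h (Finset.mem_image_of_mem _ hx)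
      exact Finset.mem_image.mpr ⟨f.symm x, this, by simp⟩
    · intro h x hx
      obtain ⟨y, hy, rfl⟩ := Finset.mem_image.mp hx
      obtain ⟨z, hz, hze⟩ := Finset.mem_image.mp (h hy)
      have : y = f z := hze.symm
      simp [this, hz]
  refine ⟨m, fun i => (G i).image f, hm, ?_, ?_, ?_⟩
  · intro i
    refine ⟨hface _ (hG i).1, ?_⟩
    rw [Finset.card_image_of_injective _ f.injective]
    exact (hG i).2
  · intro s hs
    obtain ⟨i, hi⟩ := hcov (s.image f.symm) (hfaceQ s hs)
    exact ⟨i, (hsub _ _).mp hi⟩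
  · intro i hi s hsGi ⟨j, hj, hsGj⟩
    obtain ⟨t, htGi, ⟨j', hj', htGj'⟩, htc, hst⟩ :=
      hsh i hi (s.image f.symm) ((hsub _ _).mpr hsGi) ⟨j, hj, (hsub _ _).mpr hsGj⟩
    refine ⟨t.image f, Finset.image_subset_image htGi, ⟨j', hj', Finset.image_subset_image htGj'⟩,
      ?_, ?_⟩
    · rw [Finset.card_image_of_injective _ f.injective]; exact htc
    · exact (hsub _ _).mp hst

lemma isLowerSet_image (f : P ≃o Q) {s : Set P} (h : IsLowerSet s) :
    IsLowerSet (f '' s) := by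
  rintro a b hba ⟨x, hx, rfl⟩
  refine ⟨f.symm b, h ?_ hx, by simp⟩
  have : f.symm b ≤ f.symm (f x) := f.symm.monotone hba
  simpa using this

end congrs

theorem SConstr.congr : ∀ {P : Type} [PartialOrder P] {d : ℕ}, SConstr P d →
    ∀ (Q : Type) [PartialOrder Q], (P ≃o Q) → SConstr Q d := by
  intro P _ d h
  induction h with
  | base P d hbot htop hshell =>
    intro Q _ f
    have : Finite Q := Finite.of_equiv P f.toEquiv
    obtain ⟨m, hm⟩ := hbot
    obtain ⟨M, hM⟩ := htop
    exact SConstr.base Q d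
      ⟨f m, fun x => by simpa using f.monotone (hm (f.symm x))⟩
      ⟨f M, fun x => by simpa using f.monotone (hM (f.symm x))⟩
      (pureShellable_congr f hshell)
  | union P d e I₁ I₂ hmin hrank hl1 hl2 hp1 hp2 hcover hr1 hr2 hc1 hc2 he hre hce ih1 ih2 ihe =>
    intro Q _ f
    have : Finite Q := Finite.of_equiv P f.toEquiv
    obtain ⟨m, hm⟩ := hmin
    have hEq : f '' I₁ ∩ f '' I₂ = f '' (I₁ ∩ I₂) := (Set.image_inter f.injective).symm
    refine SConstr.union Q d e (f '' I₁) (f '' I₂)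
      ⟨f m, fun x => by simpa using f.monotone (hm (f.symm x))⟩
      (hrank.congr f)
      (isLowerSet_image f hl1) (isLowerSet_image f hl2)
      ?_ ?_ ?_
      ((hr1.congr (imgIso f I₁))) ((hr2.congr (imgIso f I₂)))
      (ih1 _ (imgIso f I₁)) (ih2 _ (imgIso f I₂)) he
      (hEq ▸ (hre.congr (imgIso f (I₁ ∩ I₂)))) (hEq ▸ (ihe _ (imgIso f (I₁ ∩ I₂))))
    · intro hu
      apply hp1
      have := congrArg (fun s => f.symm '' s) hu
      simpa [Set.image_image] using this
    · intro hu
      apply hp2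
      have := congrArg (fun s => f.symm '' s) hu
      simpa [Set.image_image] using this
    · rw [← Set.image_union, hcover, Set.image_univ]
      exact f.surjective.range_eq

def setIso {P : Type*} [PartialOrder P] {S T : Set P} (h : S = T) : ↥S ≃o ↥T :=
  OrderIso.setCongr S T h

theorem lemA : ∀ (k : ℕ) (P : Type) [PartialOrder P] [Finite P] (r e : ℕ),
    0 < k → (∃ m : P, ∀ x, m ≤ x) → r - 1 ≤ e → ∀ I : Fin k → Set P,
    (∀ i, IsLowerSet (I i)) → (⋃ i, I i) = Set.univ →
    (∀ i, HasRank ↥(I i) r) → (∀ i, SConstr ↥(I i) r) →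
    (∀ S : Finset (Fin k), 2 ≤ S.card →
      HasRank ↥(⋂ i ∈ S, I i) e ∧ SConstr ↥(⋂ i ∈ S, I i) e) →
    SConstr P r := by
  intro k
  induction k with
  | zero => intro _ _ _ _ _ hk; exact absurd hk (by simp)
  | succ n ih =>
    intro P _ _ r e _ hmin he I hlow hcover hranks hc hint
    classical
    obtain ⟨m, hm⟩ := hmin
    have hmI : ∀ i, m ∈ I i := by
      intro i
      obtain ⟨x⟩ := (hranks i).nonempty'
      exact hlow i (hm x.1) x.2
    by_cases hn0 : n = 0
    · subst hn0
      have hIu : I 0 = Set.univ := by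
        rw [← hcover]
        ext x
        simp only [Set.mem_iUnion]
        exact ⟨fun h => ⟨0, h⟩, fun ⟨i, h⟩ => by
          rwa [show i = (0 : Fin 1) from Fin.ext (by omega)] at h⟩
      exact SConstr.congr (hc 0) P ((setIso hIu).trans univIso)
    have hn : 0 < n := Nat.pos_of_ne_zero hn0
    set emb : Fin n ↪ Fin (n + 1) := Fin.castSuccEmb with hembdef
    have hne_last : ∀ i : Fin n, Fin.castSucc i ≠ Fin.last n :=
      fun i => (Fin.castSucc_lt_last i).ne
    set I' : Fin n → Set P := fun i => I (Fin.castSucc i) with hI'def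
    -- key: map finsets of Fin n into Fin (n+1)
    have hmapInter : ∀ S : Finset (Fin n),
        (⋂ i ∈ S, I' i) = ⋂ j ∈ S.map emb, I j := by
      intro S
      ext x
      simp only [Set.mem_iInter, Finset.mem_map]
      constructor
      · rintro h j ⟨i, hi, rfl⟩
        exact h i hi
      · intro h i hi
        exact h _ ⟨i, hi, rfl⟩
    by_cases hJu : (⋃ i, I' i) = Set.univ
    · refine ih P r e hn ⟨m, hm⟩ he I' (fun i => hlow _) hJu (fun i => hranks _)
        (fun i => hc _) ?_
      intro S hS
      rw [hmapInter S]
      exact hint (S.map emb) (by rwa [Finset.card_map])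
    by_cases hLu : I (Fin.last n) = Set.univ
    · exact SConstr.congr (hc (Fin.last n)) P ((setIso hLu).trans univIso)
    set J : Set P := ⋃ i, I' i with hJdef
    have hJlow : IsLowerSet J := isLowerSet_iUnion (fun i => hlow _)
    have hJsub : ∀ i, I' i ⊆ J := fun i => Set.subset_iUnion I' i
    have hcov' : J ∪ I (Fin.last n) = Set.univ := by
      rw [← hcover]
      ext x
      simp only [hJdef, Set.mem_union, Set.mem_iUnion]
      constructor
      · rintro (⟨i, hi⟩ | h)
        · exact ⟨_, hi⟩
        · exact ⟨_, h⟩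
      · rintro ⟨i, hi⟩
        rcases Fin.eq_castSucc_or_eq_last i with ⟨j, rfl⟩ | rfl
        · exact Or.inl ⟨j, hi⟩
        · exact Or.inr hi
    have hrJ : HasRank ↥J r := hasRank_iUnion hn I' (fun i => hlow _) (fun i => hranks _)
    have hrankP : HasRank P r := by
      have h1 : HasRank ↥(⋃ i, I i) r :=
        hasRank_iUnion (Nat.succ_pos n) I hlow hranks
      rw [hcover] at h1
      exact h1.congr univIso
    -- SConstr of J by induction
    have hcJ : SConstr ↥J r := by
      refine ih ↥J r e hn ⟨⟨m, hJsub ⟨0, hn⟩ (hmI _)⟩, fun x => hm x.1⟩ he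
        (fun i => Subtype.val ⁻¹' (I' i)) (fun i => fun a b hba ha => hlow _ hba ha)
        ?_ ?_ ?_ ?_
      · ext x
        simpa only [Set.mem_iUnion, Set.mem_univ, iff_true, Set.mem_preimage] using
          Set.mem_iUnion.mp x.2
      · exact fun i => (hranks _).congr (restrIso J (I' i) (hJsub i)).symm
      · exact fun i => SConstr.congr (hc _) _ (restrIso J (I' i) (hJsub i)).symm
      · intro S hS
        have hSne : S.Nonempty := Finset.card_pos.mp (by omega)
        obtain ⟨i0, hi0⟩ := hSne
        have h1 : (⋂ i ∈ S, (Subtype.val ⁻¹' (I' i) : Set ↥J)) =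
            Subtype.val ⁻¹' (⋂ i ∈ S, I' i) := by
          ext x; simp
        have hsub2 : (⋂ i ∈ S, I' i) ⊆ J :=
          (Set.biInter_subset_of_mem hi0).trans (hJsub i0)
        have hint2 := hint (S.map emb) (by rwa [Finset.card_map])
        rw [← hmapInter S] at hint2
        rw [h1]
        exact ⟨hint2.1.congr (restrIso J _ hsub2).symm,
          SConstr.congr hint2.2 _ (restrIso J _ hsub2).symm⟩
    -- the intersection J ∩ I (last n)
    set K : Fin n → Set P := fun i => I' i ∩ I (Fin.last n) with hKdef
    have hKU : (⋃ i, K i) = J ∩ I (Fin.last n) := (Set.iUnion_inter _ _).symm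
    have hKlow : ∀ i, IsLowerSet (K i) := fun i => (hlow _).inter (hlow _)
    have hKpair : ∀ i : Fin n, K i = ⋂ j ∈ ({Fin.castSucc i, Fin.last n} : Finset (Fin (n+1))), I j := by
      intro i
      rw [Finset.set_biInter_insert, Finset.set_biInter_singleton]
    have hKrank : ∀ i, HasRank ↥(K i) e := by
      intro i
      rw [hKpair i]
      exact (hint _ (by rw [Finset.card_pair (hne_last i)])).1
    have hKc : ∀ i, SConstr ↥(K i) e := by
      intro i
      rw [hKpair i]
      exact (hint _ (by rw [Finset.card_pair (hne_last i)])).2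
    have hre' : HasRank ↥(J ∩ I (Fin.last n)) e := by
      have := hasRank_iUnion hn K hKlow hKrank
      rwa [hKU] at this
    have hmK : m ∈ J ∩ I (Fin.last n) := ⟨hJsub ⟨0, hn⟩ (hmI _), hmI _⟩
    have hce' : SConstr ↥(J ∩ I (Fin.last n)) e := by
      refine ih ↥(J ∩ I (Fin.last n)) e e hn ⟨⟨m, hmK⟩, fun x => hm x.1⟩ (Nat.sub_le e 1)
        (fun i => Subtype.val ⁻¹' (K i)) (fun i => fun a b hba ha => hKlow _ hba ha)
        ?_ ?_ ?_ ?_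
      · ext x
        have hy : (x : P) ∈ ⋃ i, K i := by rw [hKU]; exact x.2
        simpa only [Set.mem_iUnion, Set.mem_univ, iff_true, Set.mem_preimage] using
          Set.mem_iUnion.mp hy
      · intro i
        exact (hKrank i).congr (restrIso _ (K i) (by rw [← hKU]; exact Set.subset_iUnion K i)).symm
      · intro i
        exact SConstr.congr (hKc i) _
          (restrIso _ (K i) (by rw [← hKU]; exact Set.subset_iUnion K i)).symm
      · intro S hS
        have hSne : S.Nonempty := Finset.card_pos.mp (by omega)
        obtain ⟨i0, hi0⟩ := hSne
        have h1 : (⋂ i ∈ S, (Subtype.val ⁻¹' (K i) : Set ↥(J ∩ I (Fin.last n)))) =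
            Subtype.val ⁻¹' (⋂ i ∈ S, K i) := by
          ext x; simp
        set T : Finset (Fin (n+1)) := insert (Fin.last n) (S.map emb) with hTdef
        have hlm : Fin.last n ∉ S.map emb := by
          simp only [Finset.mem_map]
          rintro ⟨i, _, hi⟩
          exact hne_last i hi
        have hTc : 2 ≤ T.card := by
          rw [hTdef, Finset.card_insert_of_notMem hlm, Finset.card_map]
          omega
        have h2 : (⋂ i ∈ S, K i) = ⋂ j ∈ T, I j := by
          rw [hTdef, Finset.set_biInter_insert, ← hmapInter S]
          ext x
          simp only [Set.mem_inter_iff, Set.mem_iInter, hKdef]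
          constructor
          · intro h
            exact ⟨(h i0 hi0).2, fun i hi => (h i hi).1⟩
          · intro h i hi
            exact ⟨h.2 i hi, h.1⟩
        have hsub2 : (⋂ i ∈ S, K i) ⊆ J ∩ I (Fin.last n) :=
          (Set.biInter_subset_of_mem hi0).trans
            (Set.inter_subset_inter_left _ (hJsub i0))
        have hint2 := hint T hTc
        rw [← h2] at hint2
        rw [h1]
        exact ⟨hint2.1.congr (restrIso _ _ hsub2).symm,
          SConstr.congr hint2.2 _ (restrIso _ _ hsub2).symm⟩
    exact SConstr.union P r e J (I (Fin.last n)) ⟨m, hm⟩ hrankP hJlow (hlow _)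
      hJu hLu hcov' hrJ (hranks _) hcJ (hc _) he hre' hce'


/-- Let `P` be a finite poset of rank `d` with a minimum element. If `P` is the
union of strongly constructible order ideals `I₁, …, I_k` of rank `d` such that
the intersection of any two or more of these ideals is strongly constructible
of rank `d - 1`, then `P` is strongly constructible. -/
theorem sconstr_of_ideal_cover (P : Type) [PartialOrder P] [Finite P]
    (d : ℕ) (hmin : ∃ m : P, ∀ x : P, m ≤ x) (hrank : HasRank P d)
    (k : ℕ) (hk : 0 < k) (I : Fin k → Set P)
    (hlow : ∀ i, IsLowerSet (I i))
    (hcover : (⋃ i, I i) = Set.univ)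
    (hranks : ∀ i, HasRank ↥(I i) d)
    (hc : ∀ i, SConstr ↥(I i) d)
    (hint : ∀ S : Finset (Fin k), 2 ≤ S.card →
      HasRank ↥(⋂ i ∈ S, I i) (d - 1) ∧ SConstr ↥(⋂ i ∈ S, I i) (d - 1)) :
    SConstr P d :=
  lemA k P d (d - 1) hk hmin le_rfl I hlow hcover hranks hc hint
end
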